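/- The block order on words over a finite priority alphabet is a well-quasi-order. -/

import Mathlib

/-- Glue together a decomposition into blocks and separator letters:
`glue [(u₀,x₀),…,(u_{n-1},x_{n-1})] u_n = u₀x₀u₁x₁⋯x_{n-1}u_n`. -/
def glue {α : Type*} (ps : List (List α × α)) (last : List α) : List α :=
  (ps.map (fun p => p.1 ++ [p.2])).flatten ++ last

/-- The `i`-th block of a decomposition (`last` for the final index). -/
def blockAt {α : Type*} (ps : List (List α × α)) (last : List α) (i : ℕ) :
    List α :=
  if h : i < ps.length then (ps.get ⟨i, h⟩).1 else last

/-- The blockSegment `v_i y_i v_{i+1} ⋯ y_{j-1} v_j` of a decomposition. -/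
def blockSegment {α : Type*} (ps : List (List α × α)) (last : List α) (i j : ℕ) :
    List α :=
  glue ((ps.take j).drop i) (blockAt ps last j)

/-- The block order at priority level `p`: at level `0` (a single priority) it
is the subword order; at level `p+1`, either both words consist solely of
letters of priority `p+1` and are related by the subword order, or both words
are split at their priority-`p+1` letters into sub-blocks of lower priority and
there is a strictly increasing witness block map `φ` sending the first block to
the first and the last block to the last, such that blocks embed recursively in
the block order and each separator letter embeds as a subword into the
corresponding blockSegment of the larger word. -/
def BlockLE {α : Type*} (prio : α → ℕ) : ℕ → List α → List α → Prop
  | 0, u, v => u.Sublist v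
  | (p+1), u, v =>
      ((∀ a ∈ u, prio a = p + 1) ∧ (∀ a ∈ v, prio a = p + 1) ∧ u.Sublist v) ∨
      ∃ (us : List (List α × α)) (ulast : List α)
        (vs : List (List α × α)) (vlast : List α) (φ : ℕ → ℕ),
        u = glue us ulast ∧ v = glue vs vlast ∧
        (∀ q ∈ us, prio q.2 = p + 1 ∧ ∀ a ∈ q.1, prio a ≤ p) ∧
        (∀ a ∈ ulast, prio a ≤ p) ∧
        (∀ q ∈ vs, prio q.2 = p + 1 ∧ ∀ a ∈ q.1, prio a ≤ p) ∧
        (∀ a ∈ vlast, prio a ≤ p) ∧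
        (∀ i j, i < j → j ≤ us.length → φ i < φ j) ∧
        φ 0 = 0 ∧ φ us.length = vs.length ∧
        (∀ i ≤ us.length,
          BlockLE prio p (blockAt us ulast i) (blockAt vs vlast (φ i))) ∧
        (∀ i (h : i < us.length),
          [(us.get ⟨i, h⟩).2].Sublist (blockSegment vs vlast (φ i) (φ (i + 1))))

namespace BlockWqo

variable {α : Type*} {β : Type*}

theorem glue_nil (last : List α) : glue [] last = last := by simp [glue]

theorem glue_cons (q : List α × α) (ps : List (List α × α)) (last : List α) :
    glue (q :: ps) last = q.1 ++ q.2 :: glue ps last := by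
  simp [glue]

theorem mem_glue_last {a : α} {ps : List (List α × α)} {last : List α}
    (h : a ∈ last) : a ∈ glue ps last := by
  rw [glue]; exact List.mem_append_right _ h

theorem mem_glue_block {a : α} {q : List α × α} {ps : List (List α × α)} {last : List α}
    (hq : q ∈ ps) (ha : a ∈ q.1) : a ∈ glue ps last := by
  rw [glue]
  exact List.mem_append_left _ (List.mem_flatten.2
    ⟨q.1 ++ [q.2], List.mem_map_of_mem hq, List.mem_append_left _ ha⟩)

/-- Prepend a letter to the first block of a decomposition. -/
def consBlock (a : α) : List (List α × α) × List α → List (List α × α) × List α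
  | ([], last) => ([], a :: last)
  | (q :: t, last) => ((a :: q.1, q.2) :: t, last)

/-- Split a word at the letters satisfying `pB`. -/
def splitB (pB : α → Bool) : List α → List (List α × α) × List α
  | [] => ([], [])
  | a :: w =>
    if pB a then (([], a) :: (splitB pB w).1, (splitB pB w).2)
    else consBlock a (splitB pB w)

theorem splitB_spec (pB : α → Bool) (w : List α) :
    glue (splitB pB w).1 (splitB pB w).2 = w ∧
    (∀ q ∈ (splitB pB w).1, pB q.2 = true ∧ ∀ a ∈ q.1, pB a = false) ∧
    (∀ a ∈ (splitB pB w).2, pB a = false) := by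
  induction w with
  | nil => simp [splitB, glue_nil]
  | cons a w ih =>
    obtain ⟨ih1, ih2, ih3⟩ := ih
    by_cases h : pB a
    · rw [splitB, if_pos h]
      refine ⟨?_, ?_, ih3⟩
      · simp [glue_cons, ih1]
      · intro q hq
        rcases List.mem_cons.mp hq with rfl | hq
        · exact ⟨h, by simp⟩
        · exact ih2 q hq
    · rw [splitB, if_neg h]
      rcases hsp : splitB pB w with ⟨l1, l2⟩
      rw [hsp] at ih1 ih2 ih3
      dsimp only at ih1 ih2 ih3
      cases l1 with
      | nil =>
        rw [glue_nil] at ih1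
        refine ⟨?_, ?_, ?_⟩
        · simp [consBlock, glue_nil, ih1]
        · simp [consBlock]
        · simp only [consBlock]
          intro b hb
          rcases List.mem_cons.mp hb with rfl | hb
          · simpa using h
          · exact ih3 b hb
      | cons q t =>
        refine ⟨?_, ?_, ?_⟩
        · simp only [consBlock, glue_cons] at ih1 ⊢
          simp [← ih1]
        · simp only [consBlock]
          intro q' hq'
          rcases List.mem_cons.mp hq' with rfl | hq'
          · refine ⟨(ih2 q (by simp)).1, ?_⟩
            intro b hb
            rcases List.mem_cons.mp hb with rfl | hb
            · simpa using h
            · exact (ih2 q (by simp)).2 b hb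
          · exact ih2 q' (List.mem_cons_of_mem _ hq')
        · simpa [consBlock] using ih3

end BlockWqo
namespace BlockWqo

variable {α : Type*} {β : Type*}

/-- Head-anchored Higman relation on decompositions. -/
def HeadSub (R : β → β → Prop) : List β → List β → Prop
  | [], [] => True
  | q :: L, q' :: M => R q q' ∧ List.SublistForall₂ R L M
  | _, _ => False

theorem headSub_refl {R : β → β → Prop} [IsRefl β R] : ∀ l : List β, HeadSub R l l
  | [] => trivial
  | _ :: _ => ⟨refl _, refl_of (List.SublistForall₂ R) _⟩

theorem headSub_trans {R : β → β → Prop} [IsTrans β R] :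
    ∀ {l₁ l₂ l₃ : List β}, HeadSub R l₁ l₂ → HeadSub R l₂ l₃ → HeadSub R l₁ l₃
  | [], [], [], _, _ => trivial
  | _ :: _, _ :: _, _ :: _, ⟨hq, ht⟩, ⟨hq', ht'⟩ =>
      ⟨trans_of R hq hq', trans_of (List.SublistForall₂ R) ht ht'⟩

/-- The structural strong relation implying the block order. -/
def SRel (prio : α → ℕ) : ℕ → List α → List α → Prop
  | 0, u, v => u.Sublist v
  | (p+1), u, v =>
      SRel prio p (splitB (fun a => decide (prio a = p+1)) u).2
                  (splitB (fun a => decide (prio a = p+1)) v).2 ∧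
      HeadSub (fun q q' : List α × α => SRel prio p q.1 q'.1 ∧ q.2 = q'.2)
        (splitB (fun a => decide (prio a = p+1)) u).1
        (splitB (fun a => decide (prio a = p+1)) v).1

theorem srel_refl (prio : α → ℕ) : ∀ p u, SRel prio p u u
  | 0, u => List.Sublist.refl u
  | (p+1), u => by
    haveI : IsRefl (List α × α) (fun q q' : List α × α => SRel prio p q.1 q'.1 ∧ q.2 = q'.2) :=
      ⟨fun q => ⟨srel_refl prio p _, rfl⟩⟩
    exact ⟨srel_refl prio p _, headSub_refl _⟩

theorem srel_trans (prio : α → ℕ) :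
    ∀ p u v w, SRel prio p u v → SRel prio p v w → SRel prio p u w
  | 0, _, _, _, h1, h2 => List.Sublist.trans h1 h2
  | (p+1), u, v, w, h1, h2 => by
    haveI : IsTrans (List α × α) (fun q q' : List α × α => SRel prio p q.1 q'.1 ∧ q.2 = q'.2) :=
      ⟨fun a b c hab hbc => ⟨srel_trans prio p _ _ _ hab.1 hbc.1, hab.2.trans hbc.2⟩⟩
    exact ⟨srel_trans prio p _ _ _ h1.1 h2.1, headSub_trans h1.2 h2.2⟩

end BlockWqo
namespace BlockWqo

variable {α : Type*} {β : Type*}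

theorem eq_pwo [Finite α] : (Set.univ : Set α).PartiallyWellOrderedOn (· = ·) := by
  haveI : IsRefl α (· = ·) := ⟨fun _ => rfl⟩
  exact Set.finite_univ.partiallyWellOrderedOn

theorem headSub_pwo {R : β → β → Prop} [IsRefl β R] [IsTrans β R] {S : Set β}
    (hS : S.PartiallyWellOrderedOn R) :
    {l : List β | ∀ q ∈ l, q ∈ S}.PartiallyWellOrderedOn (HeadSub R) := by
  rw [Set.partiallyWellOrderedOn_iff_exists_lt]
  intro f hf
  by_cases hE : ∃ i j, i < j ∧ f i = [] ∧ f j = []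
  · obtain ⟨i, j, hij, h1, h2⟩ := hE
    exact ⟨i, j, hij, by rw [h1, h2]; trivial⟩
  · push_neg at hE
    obtain ⟨N, hN⟩ : ∃ N, ∀ t, N ≤ t → f t ≠ [] := by
      by_cases hA : ∃ a, f a = []
      · obtain ⟨a, ha⟩ := hA
        refine ⟨a + 1, fun t ht => hE a t (by omega) ha⟩
      · push_neg at hA
        exact ⟨0, fun t _ => hA t⟩
    have hgne : ∀ t : ℕ, f (t + N) ≠ [] := fun t => hN _ (by omega)
    haveI : IsPreorder β R := { refl := refl_of R, trans := fun _ _ _ => trans_of R }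
    obtain ⟨e, he⟩ := hS.exists_monotone_subseq
      (f := fun t => (f (t + N)).head (hgne t))
      (fun t => hf _ _ (List.head_mem _))
    obtain ⟨i, j, hij, hsub⟩ :=
      (Set.PartiallyWellOrderedOn.partiallyWellOrderedOn_sublistForall₂ R hS).exists_lt
        (f := fun k => (f (e k + N)).tail)
        (fun k q hq => hf _ _ (List.mem_of_mem_tail hq))
    refine ⟨e i + N, e j + N, by have := e.strictMono hij; omega, ?_⟩
    rw [← List.cons_head_tail (l := f (e i + N)) (hgne (e i)),
        ← List.cons_head_tail (l := f (e j + N)) (hgne (e j))]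
    exact ⟨he i j hij.le, hsub⟩

theorem srel_pwo [Finite α] (prio : α → ℕ) (p : ℕ) :
    {w : List α | ∀ a ∈ w, prio a ≤ p}.PartiallyWellOrderedOn (SRel prio p) := by
  induction p with
  | zero =>
    haveI : IsRefl α (· = ·) := ⟨fun _ => rfl⟩
    haveI : IsTrans α (· = ·) := ⟨fun _ _ _ h1 h2 => h1.trans h2⟩
    rw [Set.partiallyWellOrderedOn_iff_exists_lt]
    intro f hf
    obtain ⟨i, j, hij, h⟩ :=
      (Set.PartiallyWellOrderedOn.partiallyWellOrderedOn_sublistForall₂ (· = ·) eq_pwo).exists_lt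
        (f := f) (fun t x _ => Set.mem_univ x)
    refine ⟨i, j, hij, ?_⟩
    rw [List.sublistForall₂_iff] at h
    obtain ⟨l, h1, h2⟩ := h
    rw [List.forall₂_eq_eq_eq] at h1
    exact h1 ▸ h2
  | succ p IH =>
    haveI : IsRefl (List α) (SRel prio p) := ⟨srel_refl prio p⟩
    haveI : IsTrans (List α) (SRel prio p) := ⟨srel_trans prio p⟩
    haveI : IsRefl (List α × α) (fun q q' : List α × α => SRel prio p q.1 q'.1 ∧ q.2 = q'.2) :=
      ⟨fun q => ⟨srel_refl prio p _, rfl⟩⟩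
    haveI : IsTrans (List α × α) (fun q q' : List α × α => SRel prio p q.1 q'.1 ∧ q.2 = q'.2) :=
      ⟨fun a b c hab hbc => ⟨srel_trans prio p _ _ _ hab.1 hbc.1, hab.2.trans hbc.2⟩⟩
    rw [Set.partiallyWellOrderedOn_iff_exists_lt]
    intro f hf
    set pB : α → Bool := fun a => decide (prio a = p + 1) with hpB
    -- letters of blocks and of the last block have priority ≤ p
    have hblk : ∀ t, ∀ q ∈ (splitB pB (f t)).1, ∀ a ∈ q.1, prio a ≤ p := by
      intro t q hq a ha
      obtain ⟨hg, h2, _⟩ := splitB_spec pB (f t)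
      have hmem : a ∈ f t := hg ▸ mem_glue_block hq ha
      have hne : prio a ≠ p + 1 := by
        have := (h2 q hq).2 a ha
        simpa [hpB] using this
      have := hf t a hmem
      omega
    have hlst : ∀ t, ∀ a ∈ (splitB pB (f t)).2, prio a ≤ p := by
      intro t a ha
      obtain ⟨hg, _, h3⟩ := splitB_spec pB (f t)
      have hmem : a ∈ f t := hg ▸ mem_glue_last ha
      have hne : prio a ≠ p + 1 := by
        have := h3 a ha
        simpa [hpB] using this
      have := hf t a hmem
      omega
    haveI : IsPreorder (List α) (SRel prio p) :=
      { refl := srel_refl prio p, trans := srel_trans prio p }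
    obtain ⟨e, he⟩ := IH.exists_monotone_subseq (f := fun t => (splitB pB (f t)).2)
      (fun t => hlst t)
    have hq : ({w : List α | ∀ a ∈ w, prio a ≤ p} ×ˢ (Set.univ : Set α)).PartiallyWellOrderedOn
        (fun q q' : List α × α => SRel prio p q.1 q'.1 ∧ q.2 = q'.2) :=
      IH.prod eq_pwo
    obtain ⟨i, j, hij, hhead⟩ := (headSub_pwo hq).exists_lt
      (f := fun k => (splitB pB (f (e k))).1)
      (fun k q hqm => ⟨hblk (e k) q hqm, Set.mem_univ _⟩)
    exact ⟨e i, e j, e.strictMono hij, ⟨he i j hij.le, hhead⟩⟩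

end BlockWqo
namespace BlockWqo

variable {α : Type*} {β : Type*}

open List

theorem blockAt_cons_zero (q : List α × α) (ps : List (List α × α)) (last : List α) :
    blockAt (q :: ps) last 0 = q.1 := by
  simp [blockAt]

theorem blockAt_length (ps : List (List α × α)) (last : List α) :
    blockAt ps last ps.length = last := by
  simp [blockAt]

theorem blockAt_of_lt {ps : List (List α × α)} {last : List α} {i : ℕ}
    (h : i < ps.length) : blockAt ps last i = ps[i].1 := by
  simp [blockAt, h]

theorem single_sublist_blockSegment {ps : List (List α × α)} {last : List α} {a b k : ℕ}
    (hk : k < ps.length) (hak : a ≤ k) (hkb : k < b) :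
    [ps[k].2] <+ blockSegment ps last a b := by
  have hlen : k - a < ((ps.take b).drop a).length := by
    simp only [List.length_drop, List.length_take]
    omega
  have hgot : ((ps.take b).drop a)[k - a]'hlen = ps[k] := by
    rw [List.getElem_drop]
    rw [List.getElem_take]
    congr 1
    omega
  have hmem : ps[k] ∈ (ps.take b).drop a := hgot ▸ List.getElem_mem hlen
  have h1 : [ps[k].2] <+ ps[k].1 ++ [ps[k].2] := List.sublist_append_right _ _
  have h2 : ps[k].1 ++ [ps[k].2] <+ (((ps.take b).drop a).map (fun p => p.1 ++ [p.2])).flatten :=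
    List.sublist_flatten_of_mem (List.mem_map_of_mem hmem)
  refine (h1.trans h2).trans ?_
  rw [blockSegment, glue]
  exact List.sublist_append_left _ _

/-- The witness block map. -/
def phiFun (ψ : ℕ → ℕ) (n m : ℕ) : ℕ → ℕ
  | 0 => 0
  | (i + 1) => if i + 1 ≤ n then ψ i + 1 else m + 1 + (i - n)

theorem phiFun_zero (ψ : ℕ → ℕ) (n m : ℕ) : phiFun ψ n m 0 = 0 := rfl

theorem phiFun_last (ψ : ℕ → ℕ) (n m : ℕ) : phiFun ψ n m (n + 1) = m + 1 := by
  show (if n + 1 ≤ n then ψ n + 1 else m + 1 + (n - n)) = m + 1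
  rw [if_neg (by omega)]
  omega

theorem phiFun_mid (ψ : ℕ → ℕ) (n m : ℕ) {i : ℕ} (hn : i + 1 ≤ n) :
    phiFun ψ n m (i + 1) = ψ i + 1 := by
  show (if i + 1 ≤ n then ψ i + 1 else m + 1 + (i - n)) = ψ i + 1
  rw [if_pos hn]

theorem phiFun_strictMono {ψ : ℕ → ℕ} {n m : ℕ} (hmono : StrictMono ψ)
    (hbound : ∀ k, k < n → ψ k < m) : StrictMono (phiFun ψ n m) := by
  apply strictMono_nat_of_lt_succ
  intro i
  cases i with
  | zero =>
    show 0 < if 0 + 1 ≤ n then ψ 0 + 1 else m + 1 + (0 - n)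
    split_ifs <;> omega
  | succ k =>
    show (if k + 1 ≤ n then ψ k + 1 else m + 1 + (k - n)) <
      if k + 1 + 1 ≤ n then ψ (k + 1) + 1 else m + 1 + (k + 1 - n)
    by_cases h1 : k + 1 + 1 ≤ n
    · rw [if_pos (by omega : k + 1 ≤ n), if_pos h1]
      have := hmono (show k < k + 1 by omega)
      omega
    · by_cases h2 : k + 1 ≤ n
      · rw [if_pos h2, if_neg h1]
        have := hbound k (by omega)
        omega
      · rw [if_neg h2, if_neg h1]
        omega

theorem splitB_prio_block (prio : α → ℕ) (p : ℕ) {w : List α}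
    (hw : ∀ a ∈ w, prio a ≤ p + 1) :
    ∀ q ∈ (splitB (fun a => decide (prio a = p + 1)) w).1, ∀ a ∈ q.1, prio a ≤ p := by
  intro q hq a ha
  obtain ⟨hg, h2, _⟩ := splitB_spec (fun a => decide (prio a = p + 1)) w
  have hmem : a ∈ w := hg ▸ mem_glue_block hq ha
  have hne : prio a ≠ p + 1 := by simpa using (h2 q hq).2 a ha
  have := hw a hmem
  omega

theorem splitB_prio_sep (prio : α → ℕ) (p : ℕ) (w : List α) :
    ∀ q ∈ (splitB (fun a => decide (prio a = p + 1)) w).1, prio q.2 = p + 1 := by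
  intro q hq
  obtain ⟨_, h2, _⟩ := splitB_spec (fun a => decide (prio a = p + 1)) w
  simpa using (h2 q hq).1

theorem splitB_prio_last (prio : α → ℕ) (p : ℕ) {w : List α}
    (hw : ∀ a ∈ w, prio a ≤ p + 1) :
    ∀ a ∈ (splitB (fun a => decide (prio a = p + 1)) w).2, prio a ≤ p := by
  intro a ha
  obtain ⟨hg, _, h3⟩ := splitB_spec (fun a => decide (prio a = p + 1)) w
  have hmem : a ∈ w := hg ▸ mem_glue_last ha
  have hne : prio a ≠ p + 1 := by simpa using h3 a ha
  have := hw a hmem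
  omega

end BlockWqo
namespace BlockWqo

variable {α : Type*} {β : Type*}

open List

theorem srel_toBlockLE (prio : α → ℕ) (p : ℕ) :
    ∀ u v : List α, (∀ a ∈ u, prio a ≤ p) → (∀ a ∈ v, prio a ≤ p) →
      SRel prio p u v → BlockLE prio p u v := by
  induction p with
  | zero => intro u v _ _ h; exact h
  | succ p IH =>
    intro u v hu hv h
    obtain ⟨h1, h2⟩ := h
    set pB : α → Bool := fun a => decide (prio a = p + 1) with hpB
    obtain ⟨hgu, -, -⟩ := splitB_spec pB u
    obtain ⟨hgv, -, -⟩ := splitB_spec pB v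
    have hu_blk := splitB_prio_block prio p hu
    have hv_blk := splitB_prio_block prio p hv
    have hu_sep := splitB_prio_sep prio p u
    have hv_sep := splitB_prio_sep prio p v
    have hu_lst := splitB_prio_last prio p hu
    have hv_lst := splitB_prio_last prio p hv
    rcases hsu : (splitB pB u).1 with _ | ⟨q, L⟩ <;>
      rcases hsv : (splitB pB v).1 with _ | ⟨q', M⟩ <;>
      rw [hsu, hsv] at h2
    · -- both empty
      have hgu' := hgu; rw [hsu, glue_nil] at hgu'
      have hgv' := hgv; rw [hsv, glue_nil] at hgv'
      refine Or.inr ⟨[], (splitB pB u).2, [], (splitB pB v).2, id,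
        (by rw [glue_nil, hgu']), (by rw [glue_nil, hgv']),
        by simp, hu_lst, by simp, hv_lst, fun i j hij _ => hij, rfl, rfl, ?_, ?_⟩
      · intro i hi
        have hi0 : i = 0 := by simpa using hi
        subst hi0
        have e1 : blockAt ([] : List (List α × α)) (splitB pB u).2 0 = (splitB pB u).2 := by
          simp [blockAt]
        have e2 : blockAt ([] : List (List α × α)) (splitB pB v).2 0 = (splitB pB v).2 := by
          simp [blockAt]
        rw [e1, id, e2]
        exact IH _ _ hu_lst hv_lst h1
      · intro i hi
        simp at hi
    · exact h2.elim
    · exact h2.elim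
    · -- both nonempty
      obtain ⟨hR, hmid⟩ := h2
      rw [List.sublistForall₂_iff] at hmid
      obtain ⟨L', hf2, hsubl⟩ := hmid
      have hlen : L.length = L'.length := hf2.length_eq
      rw [List.sublist_iff_exists_orderEmbedding_getElem?_eq] at hsubl
      obtain ⟨ψ, hψ⟩ := hsubl
      set n := L.length with hn
      set m := M.length with hm
      have hget : ∀ k, (hk : k < n) → ∃ h : ψ k < m,
          M.get ⟨ψ k, h⟩ = L'.get ⟨k, by omega⟩ := by
        intro k hk
        have h0 := hψ k
        rw [List.getElem?_eq_getElem (show k < L'.length by omega)] at h0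
        have h1' := h0.symm
        rw [List.getElem?_eq_some_iff] at h1'
        obtain ⟨hlt, heq⟩ := h1'
        exact ⟨hlt, heq⟩
      have hbound : ∀ k, k < n → ψ k < m := fun k hk => (hget k hk).1
      have hφmono : StrictMono (phiFun ψ n m) := phiFun_strictMono ψ.strictMono hbound
      -- bounds for head blocks
      have hq_mem : q ∈ (splitB pB u).1 := by rw [hsu]; exact List.mem_cons_self
      have hq'_mem : q' ∈ (splitB pB v).1 := by rw [hsv]; exact List.mem_cons_self
      have hgu' := hgu; rw [hsu] at hgu'
      have hgv' := hgv; rw [hsv] at hgv'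
      refine Or.inr ⟨q :: L, (splitB pB u).2, q' :: M, (splitB pB v).2, phiFun ψ n m,
        hgu'.symm, hgv'.symm, ?_, hu_lst, ?_, hv_lst,
        fun i j hij _ => hφmono hij, rfl, ?_, ?_, ?_⟩
      · intro qq hqq
        have : qq ∈ (splitB pB u).1 := by rw [hsu]; exact hqq
        exact ⟨hu_sep qq this, hu_blk qq this⟩
      · intro qq hqq
        have : qq ∈ (splitB pB v).1 := by rw [hsv]; exact hqq
        exact ⟨hv_sep qq this, hv_blk qq this⟩
      · -- φ (n+1) = m+1
        show phiFun ψ n m (q :: L).length = (q' :: M).length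
        simp only [List.length_cons, ← hn, ← hm]
        exact phiFun_last ψ n m
      · -- blocks
        intro i hi
        simp only [List.length_cons, ← hn] at hi
        rcases i with _ | k
        · rw [phiFun_zero, blockAt_cons_zero, blockAt_cons_zero]
          exact IH q.1 q'.1 (hu_blk q hq_mem) (hv_blk q' hq'_mem) hR.1
        · rcases Nat.lt_or_ge k n with hk | hk
          · obtain ⟨hψlt, hMget⟩ := hget k hk
            rw [phiFun_mid ψ n m (by omega),
              blockAt_of_lt (show k + 1 < (q :: L).length by simp [← hn]; omega),
              blockAt_of_lt (show ψ k + 1 < (q' :: M).length by simp [← hm]; omega)]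
            simp only [List.getElem_cons_succ]
            have e1 : M[ψ k] = L'[k]'(by omega) := by simpa [List.get_eq_getElem] using hMget
            rw [e1]
            have hrel := hf2.get (show k < L.length from hk) (show k < L'.length by omega)
            simp only [List.get_eq_getElem] at hrel
            have hLk : L[k] ∈ (splitB pB u).1 := by
              rw [hsu]; exact List.mem_cons_of_mem _ (List.getElem_mem _)
            have hL'k : L'[k]'(by omega) ∈ (splitB pB v).1 := by
              rw [hsv]
              refine List.mem_cons_of_mem _ ?_
              rw [← e1]; exact List.getElem_mem _
            exact IH _ _ (hu_blk _ hLk) (hv_blk _ hL'k) hrel.1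
          · have hkn : k = n := by omega
            have e1 : k + 1 = (q :: L).length := by simp [hn, hkn]
            have e2 : phiFun ψ n m (k + 1) = (q' :: M).length := by
              rw [hkn]
              simp only [List.length_cons, ← hm]
              exact phiFun_last ψ n m
            rw [e2, e1, blockAt_length, blockAt_length]
            exact IH _ _ hu_lst hv_lst h1
      · -- separators
        intro i hi
        simp only [List.length_cons, ← hn] at hi
        rcases i with _ | k
        · have hsep : ((q :: L).get ⟨0, by simp⟩).2 = (q' :: M)[0].2 := hR.2
          rw [hsep, phiFun_zero]
          exact single_sublist_blockSegment (by simp) (Nat.le_refl 0)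
            (by simpa [phiFun_zero] using hφmono (Nat.zero_lt_one))
        · have hk : k < n := by omega
          obtain ⟨hψlt, hMget⟩ := hget k hk
          have hrel := hf2.get (show k < L.length from hk) (show k < L'.length by omega)
          simp only [List.get_eq_getElem] at hrel
          have e1 : M[ψ k] = L'[k]'(by omega) := by simpa [List.get_eq_getElem] using hMget
          have hsep : ((q :: L).get ⟨k + 1, by simp [← hn]; omega⟩).2
              = ((q' :: M)[ψ k + 1]'(by simp [← hm]; omega)).2 := by
            simp only [List.get_eq_getElem, List.getElem_cons_succ]
            rw [e1]
            exact hrel.2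
          rw [hsep, phiFun_mid ψ n m (by omega)]
          refine single_sublist_blockSegment (by simp [← hm]; omega) (Nat.le_refl _) ?_
          have := hφmono (show k + 1 < k + 2 by omega)
          rwa [phiFun_mid ψ n m (by omega)] at this

end BlockWqo

/-- The block order on words over a finite priority alphabet is a
well-quasi-order. -/
theorem blockLE_wqo {α : Type*} [Finite α] (prio : α → ℕ) (d : ℕ)
    (hd : ∀ a : α, prio a ≤ d) (f : ℕ → List α) :
    ∃ i j : ℕ, i < j ∧ BlockLE prio d (f i) (f j) := by
  obtain ⟨i, j, hij, h⟩ := (BlockWqo.srel_pwo prio d).exists_lt (f := f) (fun t a _ => hd a)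
  exact ⟨i, j, hij, BlockWqo.srel_toBlockLE prio d _ _ (fun a _ => hd a) (fun a _ => hd a) h⟩
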